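/- arXiv:2501.09691 — 2 statements merged into one kernel-verified Lean document; each statement's English description precedes it below -/
import Mathlib

section
/- Let w, w*, x ∈ ℝ^d with ‖x‖₂ ≤ 1, and suppose |w·x| ≥ γ/2 for some γ > 0. Let η, η_x ∈ [0, 1/2) with η_x ≤ η, and set g = ((1−2η)·sign(w·x) − (1−2η_x)·sign(w*·x)) · x / max(|w·x|, γ/2). Then g·(w − w*) ≥ 2(err − η), where err = η_x if sign(w·x) = sign(w*·x) and err = 1 − η_x otherwise. -/
noncomputable def sgn (t : ℝ) : ℝ := if t ≥ 0 then 1 else -1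

theorem stmt_1 {d : ℕ} (w wstar x : EuclideanSpace ℝ (Fin d)) (γ η ηx : ℝ)
    (hγ : 0 < γ) (hx : ‖x‖ ≤ 1) (hfar : |(inner ℝ w x : ℝ)| ≥ γ / 2)
    (hη0 : 0 ≤ ηx) (hη1 : η < 1 / 2) (hηx : ηx ≤ η)
    (g : EuclideanSpace ℝ (Fin d))
    (hg : g = (((1 - 2 * η) * sgn (inner ℝ w x) - (1 - 2 * ηx) * sgn (inner ℝ wstar x))
      / max |(inner ℝ w x : ℝ)| (γ / 2)) • x)
    (err : ℝ)
    (herr : err = if sgn (inner ℝ w x) = sgn ((inner ℝ wstar x : ℝ)) then ηx else 1 - ηx) :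
    (inner ℝ g (w - wstar) : ℝ) ≥ 2 * (err - η) := by
  set a : ℝ := inner ℝ w x with ha
  set b : ℝ := inner ℝ wstar x with hb
  have hM : max |a| (γ / 2) = |a| := max_eq_left hfar
  have hapos : 0 < |a| := lt_of_lt_of_le (by linarith) hfar
  have hinner : (inner ℝ g (w - wstar) : ℝ)
      = (((1 - 2 * η) * sgn a - (1 - 2 * ηx) * sgn b) * (a - b)) / |a| := by
    have h1 : (inner ℝ x w : ℝ) = a := real_inner_comm w x
    have h2 : (inner ℝ x wstar : ℝ) = b := real_inner_comm wstar x
    rw [hg, real_inner_smul_left, inner_sub_right, hM, h1, h2]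
    ring
  rw [hinner, ge_iff_le, le_div_iff₀ hapos]
  by_cases hA : a ≥ 0 <;> by_cases hB : b ≥ 0 <;>
    simp only [sgn, hA, hB, if_true, if_false, ite_true, ite_false] at herr ⊢
  · rw [abs_of_nonneg hA]
    nlinarith [mul_nonneg (by linarith : (0:ℝ) ≤ η - ηx) hB]
  · push_neg at hB
    rw [abs_of_nonneg hA]
    rw [if_neg (by norm_num)] at herr
    nlinarith [mul_nonneg (by linarith : (0:ℝ) ≤ 2 - 2*η - 2*ηx) (by linarith : (0:ℝ) ≤ -b)]
  · rw [abs_of_neg (not_le.mp hA)]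
    rw [if_neg (by norm_num)] at herr
    nlinarith [mul_nonneg (by linarith : (0:ℝ) ≤ 2 - 2*η - 2*ηx) hB]
  · push_neg at hB
    rw [abs_of_neg (not_le.mp hA)]
    nlinarith [mul_nonneg (by linarith : (0:ℝ) ≤ η - ηx) (by linarith : (0:ℝ) ≤ -b)]
end

section
/- Let w, w*, x ∈ ℝ^d with ‖x‖₂ ≤ 1, γ > 0, |w*·x| ≥ γ (margin condition), and |w·x| < γ/2. Let η, η_x ∈ [0, 1/2) with η_x ≤ η, and set g = ((1−2η)·sign(w·x) − (1−2η_x)·sign(w*·x)) · x / max(|w·x|, γ/2). Then g·(w − w*) ≥ 2(err − η), where err = η_x if sign(w·x) = sign(w*·x) and err = 1 − η_x otherwise. -/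
theorem stmt_2 {d : ℕ} (w wstar x : EuclideanSpace ℝ (Fin d)) (γ η ηx : ℝ)
    (hγ : 0 < γ) (hx : ‖x‖ ≤ 1) (hmargin : |(inner ℝ wstar x : ℝ)| ≥ γ)
    (hclose : |(inner ℝ w x : ℝ)| < γ / 2)
    (hη0 : 0 ≤ ηx) (hη1 : η < 1 / 2) (hηx : ηx ≤ η)
    (g : EuclideanSpace ℝ (Fin d))
    (hg : g = (((1 - 2 * η) * sgn (inner ℝ w x) - (1 - 2 * ηx) * sgn (inner ℝ wstar x))
      / max |(inner ℝ w x : ℝ)| (γ / 2)) • x)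
    (err : ℝ)
    (herr : err = if sgn (inner ℝ w x) = sgn ((inner ℝ wstar x : ℝ)) then ηx else 1 - ηx) :
    (inner ℝ g (w - wstar) : ℝ) ≥ 2 * (err - η) := by
  set a : ℝ := inner ℝ w x with ha
  set b : ℝ := inner ℝ wstar x with hb
  have hmax : max |a| (γ/2) = γ/2 := max_eq_right (le_of_lt hclose)
  have hinner : (inner ℝ g (w - wstar) : ℝ) =
      (((1 - 2*η) * sgn a - (1 - 2*ηx) * sgn b) / (γ/2)) * (a - b) := by
    rw [hg, hmax, real_inner_smul_left]
    congr 1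
    rw [inner_sub_right]
    simp [ha, hb, real_inner_comm]
  have habs := abs_lt.mp hclose
  rw [hinner, herr, ge_iff_le, div_mul_eq_mul_div, le_div_iff₀ (by linarith)]
  rcases le_or_gt 0 a with haa | haa <;> rcases le_or_gt 0 b with hbb | hbb
  · have hb' : b ≥ γ := by rwa [abs_of_nonneg hbb] at hmargin
    simp only [sgn, if_pos haa, if_pos hbb, if_pos rfl]
    norm_num
    nlinarith [mul_nonneg (sub_nonneg.mpr hηx) (by linarith : (0:ℝ) ≤ b - a - γ/2)]
  · have hb' : b ≤ -γ := by
      have := (abs_of_neg hbb) ▸ hmargin; linarith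
    have hne : (if a ≥ 0 then (1:ℝ) else -1) ≠ (if b ≥ 0 then (1:ℝ) else -1) := by
      rw [if_pos haa, if_neg (not_le.mpr hbb)]; norm_num
    simp only [sgn, if_pos haa, if_neg (not_le.mpr hbb), if_neg hne]
    norm_num
    nlinarith [mul_nonneg (by linarith : (0:ℝ) ≤ 1 - η - ηx) (by linarith : (0:ℝ) ≤ a - b - γ)]
  · have hb' : b ≥ γ := by rwa [abs_of_nonneg hbb] at hmargin
    have hne : (if a ≥ 0 then (1:ℝ) else -1) ≠ (if b ≥ 0 then (1:ℝ) else -1) := by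
      rw [if_neg (not_le.mpr haa), if_pos hbb]; norm_num
    simp only [sgn, if_neg (not_le.mpr haa), if_pos hbb, if_neg hne]
    norm_num
    nlinarith [mul_nonneg (by linarith : (0:ℝ) ≤ 1 - η - ηx) (by linarith : (0:ℝ) ≤ b - a - γ)]
  · have hb' : b ≤ -γ := by
      have := (abs_of_neg hbb) ▸ hmargin; linarith
    simp only [sgn, if_neg (not_le.mpr haa), if_neg (not_le.mpr hbb), if_pos rfl]
    norm_num
    nlinarith [mul_nonneg (sub_nonneg.mpr hηx) (by linarith : (0:ℝ) ≤ a - b - γ/2)]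
end
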